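/- arXiv:2103.07293 — 2 statements merged into one kernel-verified Lean document; each statement's English description precedes it below -/
import Mathlib

section
/- Let ω_1, ..., ω_M be vectors in ℝ^D with ‖ω_k‖ ≤ C for all k, and let x_1, ..., x_N ∈ ℝ^D with labels y_i ∈ {1,...,M}. Then the average softmax classification loss satisfies (1/N) Σ_{i=1}^N [-log(exp(⟨ω_{y_i}, x_i⟩) / Σ_{j=1}^M exp(⟨ω_j, x_i⟩))] ≥ log M - (C/(M·N)) Σ_{j=1}^M ‖(M-1) Σ_{i : y_i = j} x_i - Σ_{i : y_i ≠ j} x_i‖. -/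
lemma logsumexp_ge (M : ℕ) (hM : 1 ≤ M) (b : Fin M → ℝ) :
    Real.log M + (∑ j, b j) / M ≤ Real.log (∑ j, Real.exp (b j)) := by
  have hMpos : (0:ℝ) < M := by exact_mod_cast hM
  set m := (∑ j, b j) / M with hm
  have hsumb : ∑ j, b j = M * m := by rw [hm]; field_simp
  have key : (M : ℝ) * Real.exp m ≤ ∑ j, Real.exp (b j) := by
    have h1 : ∀ j : Fin M, Real.exp m * (1 + (b j - m)) ≤ Real.exp (b j) := by
      intro j
      have h := Real.add_one_le_exp (b j - m)
      calc Real.exp m * (1 + (b j - m)) ≤ Real.exp m * Real.exp (b j - m) := by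
            nlinarith [Real.exp_pos m]
        _ = Real.exp (b j) := by rw [← Real.exp_add]; ring_nf
    have hsum : ∑ j : Fin M, (1 + (b j - m)) = M := by
      rw [Finset.sum_add_distrib, Finset.sum_sub_distrib, Finset.sum_const, Finset.sum_const]
      simp [hsumb]
    calc (M:ℝ) * Real.exp m = Real.exp m * ∑ j : Fin M, (1 + (b j - m)) := by rw [hsum]; ring
      _ = ∑ j, Real.exp m * (1 + (b j - m)) := by rw [Finset.mul_sum]
      _ ≤ ∑ j, Real.exp (b j) := Finset.sum_le_sum fun j _ => h1 j
  have hlog := Real.log_le_log (by positivity) key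
  rwa [Real.log_mul (ne_of_gt hMpos) (Real.exp_ne_zero _), Real.log_exp] at hlog

theorem avg_softmax_loss_lower_bound (D M N : ℕ) (hD : 1 ≤ D) (hM : 1 ≤ M) (hN : 1 ≤ N)
    (C : ℝ) (hC : 0 ≤ C)
    (ω : Fin M → EuclideanSpace ℝ (Fin D)) (hω : ∀ k, ‖ω k‖ ≤ C)
    (x : Fin N → EuclideanSpace ℝ (Fin D)) (y : Fin N → Fin M) :
    (1 / N) * ∑ i, -Real.log (Real.exp (inner ℝ (ω (y i)) (x i) : ℝ) /
        ∑ j, Real.exp (inner ℝ (ω j) (x i) : ℝ)) ≥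
      Real.log M - (C / (M * N)) *
        ∑ j, ‖((M : ℝ) - 1) • (∑ i ∈ Finset.univ.filter (fun i => y i = j), x i) -
          ∑ i ∈ Finset.univ.filter (fun i => y i ≠ j), x i‖ := by
  have hMpos : (0:ℝ) < M := by exact_mod_cast hM
  have hNpos : (0:ℝ) < N := by exact_mod_cast hN
  set v : Fin M → EuclideanSpace ℝ (Fin D) := fun j =>
    ((M : ℝ) - 1) • (∑ i ∈ Finset.univ.filter (fun i => y i = j), x i) -
      ∑ i ∈ Finset.univ.filter (fun i => y i ≠ j), x i with hv
  -- per-sample bound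
  have hstep : ∀ i, Real.log M + ((∑ j, (inner ℝ (ω j) (x i) : ℝ)) / M - (inner ℝ (ω (y i)) (x i) : ℝ)) ≤
      -Real.log (Real.exp (inner ℝ (ω (y i)) (x i) : ℝ) /
        ∑ j, Real.exp (inner ℝ (ω j) (x i) : ℝ)) := by
    intro i
    have hS : 0 < ∑ j, Real.exp ((inner ℝ (ω j) (x i) : ℝ)) :=
      Finset.sum_pos (fun j _ => Real.exp_pos _) ⟨⟨0, hM⟩, Finset.mem_univ _⟩
    rw [Real.log_div (Real.exp_ne_zero _) hS.ne', Real.log_exp, neg_sub]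
    have h := logsumexp_ge M hM (fun j => (inner ℝ (ω j) (x i) : ℝ))
    linarith
  -- algebraic identity
  have hinner : ∀ j, (inner ℝ (ω j) (v j) : ℝ) =
      ((M:ℝ)-1) * ∑ i ∈ Finset.univ.filter (fun i => y i = j), (inner ℝ (ω j) (x i) : ℝ) -
        ∑ i ∈ Finset.univ.filter (fun i => y i ≠ j), (inner ℝ (ω j) (x i) : ℝ) := by
    intro j
    simp [hv, inner_sub_right, inner_smul_right, inner_sum]
  have hre : ∑ j, (inner ℝ (ω j) (v j) : ℝ)
      = (M:ℝ) * ∑ i, (inner ℝ (ω (y i)) (x i) : ℝ) - ∑ i, ∑ j, (inner ℝ (ω j) (x i) : ℝ) := by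
    calc ∑ j, (inner ℝ (ω j) (v j) : ℝ)
        = ∑ j, ((M:ℝ) * ∑ i ∈ Finset.univ.filter (fun i => y i = j), (inner ℝ (ω j) (x i) : ℝ)
            - ∑ i, (inner ℝ (ω j) (x i) : ℝ)) := by
          refine Finset.sum_congr rfl fun j _ => ?_
          rw [hinner j, ← Finset.sum_filter_add_sum_filter_not Finset.univ (fun i => y i = j)
            (fun i => (inner ℝ (ω j) (x i) : ℝ))]
          ring
      _ = (M:ℝ) * ∑ j, ∑ i ∈ Finset.univ.filter (fun i => y i = j), (inner ℝ (ω j) (x i) : ℝ)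
            - ∑ j, ∑ i, (inner ℝ (ω j) (x i) : ℝ) := by
          rw [Finset.sum_sub_distrib, Finset.mul_sum]
      _ = (M:ℝ) * ∑ i, (inner ℝ (ω (y i)) (x i) : ℝ) - ∑ i, ∑ j, (inner ℝ (ω j) (x i) : ℝ) := by
          rw [Finset.sum_comm]
          congr 1
          congr 1
          calc ∑ j, ∑ i ∈ Finset.univ.filter (fun i => y i = j), (inner ℝ (ω j) (x i) : ℝ)
              = ∑ j, ∑ i ∈ Finset.univ.filter (fun i => y i = j), (inner ℝ (ω (y i)) (x i) : ℝ) := by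
                refine Finset.sum_congr rfl fun j _ => Finset.sum_congr rfl fun i hi => ?_
                rw [Finset.mem_filter] at hi
                rw [hi.2]
            _ = ∑ i, (inner ℝ (ω (y i)) (x i) : ℝ) :=
                Finset.sum_fiberwise Finset.univ y (fun i => (inner ℝ (ω (y i)) (x i) : ℝ))
  -- Cauchy–Schwarz
  have hcs : ∑ j, (inner ℝ (ω j) (v j) : ℝ) ≤ C * ∑ j, ‖v j‖ := by
    rw [Finset.mul_sum]
    refine Finset.sum_le_sum fun j _ => ?_
    exact (real_inner_le_norm _ _).trans
      (mul_le_mul_of_nonneg_right (hω j) (norm_nonneg _))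
  -- sum the per-sample bounds
  have hsum : (N:ℝ) * Real.log M - (1/M) * ∑ j, (inner ℝ (ω j) (v j) : ℝ) ≤
      ∑ i, -Real.log (Real.exp (inner ℝ (ω (y i)) (x i) : ℝ) /
        ∑ j, Real.exp (inner ℝ (ω j) (x i) : ℝ)) := by
    have h := Finset.sum_le_sum (fun i (_ : i ∈ Finset.univ) => hstep i)
    have hlhs : ∑ i : Fin N, (Real.log M + ((∑ j, (inner ℝ (ω j) (x i) : ℝ)) / M
          - (inner ℝ (ω (y i)) (x i) : ℝ)))
        = (N:ℝ) * Real.log M - (1/M) * ∑ j, (inner ℝ (ω j) (v j) : ℝ) := by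
      rw [hre, Finset.sum_add_distrib, Finset.sum_sub_distrib, Finset.sum_const,
        Finset.card_univ, Fintype.card_fin, nsmul_eq_mul, ← Finset.sum_div]
      field_simp
      ring
    linarith [h, hlhs.ge, hlhs.le]
  have htotal : (N:ℝ) * Real.log M - (C/M) * ∑ j, ‖v j‖ ≤
      ∑ i, -Real.log (Real.exp (inner ℝ (ω (y i)) (x i) : ℝ) /
        ∑ j, Real.exp (inner ℝ (ω j) (x i) : ℝ)) := by
    have h2 : (1/(M:ℝ)) * ∑ j, (inner ℝ (ω j) (v j) : ℝ) ≤ (1/(M:ℝ)) * (C * ∑ j, ‖v j‖) :=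
      mul_le_mul_of_nonneg_left hcs (by positivity)
    have h3 : (1/(M:ℝ)) * (C * ∑ j, ‖v j‖) = (C/M) * ∑ j, ‖v j‖ := by ring
    linarith
  have hfin : Real.log M - (C / (M * N)) * ∑ j, ‖v j‖
      = (1/N) * ((N:ℝ) * Real.log M - (C/M) * ∑ j, ‖v j‖) := by
    field_simp
  rw [ge_iff_le, hfin]
  exact mul_le_mul_of_nonneg_left htotal (by positivity)
end

section
/- Under the same setup with two sets of embeddings x_i and v_i in ℝ^D sharing labels y_i, and classifier weights ω_k with ‖ω_k‖ ≤ C, the combined loss L_face + L_voice, where L_face = (1/N) Σ_i [-log(exp(⟨ω_{y_i}, x_i⟩)/Σ_j exp(⟨ω_j, x_i⟩))] and similarly for L_voice with v_i, satisfies L_face + L_voice ≥ 2 log M - (C/(M·N)) Σ_{j=1}^M ‖(M-1) Σ_{i : y_i = j} (x_i + v_i) - Σ_{i : y_i ≠ j} (x_i + v_i)‖. -/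
lemma lse_lower (M : ℕ) (hM : 1 ≤ M) (a : Fin M → ℝ) (k : Fin M) :
    Real.log M + (1/M) * ∑ j, a j - a k ≤
      -Real.log (Real.exp (a k) / ∑ j, Real.exp (a j)) := by
  have hM0 : (0:ℝ) < M := by exact_mod_cast hM
  have hS : 0 < ∑ j, Real.exp (a j) :=
    Finset.sum_pos (fun j _ => Real.exp_pos _) ⟨⟨0, hM⟩, Finset.mem_univ _⟩
  rw [Real.log_div (Real.exp_pos _).ne' hS.ne', Real.log_exp, neg_sub]
  have hJ : Real.exp (∑ j, (1/(M:ℝ)) • a j) ≤ ∑ j, (1/(M:ℝ)) • Real.exp (a j) := by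
    refine convexOn_exp.map_sum_le (fun _ _ => by positivity) ?_ (fun _ _ => Set.mem_univ _)
    simp [Finset.sum_const, Finset.card_univ]
    field_simp
  have h2 : (M:ℝ) * Real.exp ((1/M) * ∑ j, a j) ≤ ∑ j, Real.exp (a j) := by
    simp only [smul_eq_mul, ← Finset.mul_sum] at hJ
    calc (M:ℝ) * Real.exp ((1/M) * ∑ j, a j)
        ≤ (M:ℝ) * ((1/(M:ℝ)) * ∑ j, Real.exp (a j)) := by gcongr
      _ = ∑ j, Real.exp (a j) := by field_simp
  have := Real.log_le_log (by positivity) h2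
  rw [Real.log_mul hM0.ne' (Real.exp_pos _).ne', Real.log_exp] at this
  linarith

lemma modality_bound (D M N : ℕ) (hM : 1 ≤ M) (hN : 1 ≤ N)
    (ω : Fin M → EuclideanSpace ℝ (Fin D))
    (z : Fin N → EuclideanSpace ℝ (Fin D)) (y : Fin N → Fin M) :
    Real.log M - (1/((M:ℝ)*N)) * ∑ j, (inner ℝ (ω j)
        ((M:ℝ) • (∑ i ∈ Finset.univ.filter (fun i => y i = j), z i) - ∑ i, z i) : ℝ) ≤
      (1 / N) * ∑ i, -Real.log (Real.exp (inner ℝ (ω (y i)) (z i) : ℝ) /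
        ∑ j, Real.exp (inner ℝ (ω j) (z i) : ℝ)) := by
  have hM0 : (0:ℝ) < M := by exact_mod_cast hM
  have hN0 : (0:ℝ) < N := by exact_mod_cast hN
  set B : ℝ := ∑ i, (inner ℝ (ω (y i)) (z i) : ℝ) with hB
  set A : ℝ := ∑ j, (inner ℝ (ω j) (∑ i, z i) : ℝ) with hA
  have key : B = ∑ j, (inner ℝ (ω j) (∑ i ∈ Finset.univ.filter (fun i => y i = j), z i) : ℝ) := by
    rw [hB, ← Finset.sum_fiberwise Finset.univ y (fun i => (inner ℝ (ω (y i)) (z i) : ℝ))]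
    refine Finset.sum_congr rfl fun j _ => ?_
    rw [inner_sum]
    exact Finset.sum_congr rfl fun i hi => by rw [(Finset.mem_filter.mp hi).2]
  have hsum : ∑ j, (inner ℝ (ω j)
      ((M:ℝ) • (∑ i ∈ Finset.univ.filter (fun i => y i = j), z i) - ∑ i, z i) : ℝ)
      = (M:ℝ) * B - A := by
    rw [key, hA, Finset.mul_sum, ← Finset.sum_sub_distrib]
    refine Finset.sum_congr rfl fun j _ => ?_
    rw [inner_sub_right, inner_smul_right]
  have hAsum : A = ∑ i, ∑ j, (inner ℝ (ω j) (z i) : ℝ) := by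
    rw [hA, Finset.sum_comm]
    exact Finset.sum_congr rfl fun j _ => (inner_sum _ _ _)
  have hterm : ∀ i, Real.log M + (1/M) * ∑ j, (inner ℝ (ω j) (z i) : ℝ)
      - (inner ℝ (ω (y i)) (z i) : ℝ) ≤
      -Real.log (Real.exp (inner ℝ (ω (y i)) (z i) : ℝ) /
        ∑ j, Real.exp (inner ℝ (ω j) (z i) : ℝ)) :=
    fun i => lse_lower M hM (fun j => (inner ℝ (ω j) (z i) : ℝ)) (y i)
  have hsum2 : (N:ℝ) * Real.log M + (1/M) * A - B ≤
      ∑ i, -Real.log (Real.exp (inner ℝ (ω (y i)) (z i) : ℝ) /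
        ∑ j, Real.exp (inner ℝ (ω j) (z i) : ℝ)) := by
    calc (N:ℝ) * Real.log M + (1/M) * A - B
        = ∑ i : Fin N, (Real.log M + (1/M) * ∑ j, (inner ℝ (ω j) (z i) : ℝ)
            - (inner ℝ (ω (y i)) (z i) : ℝ)) := by
          rw [Finset.sum_sub_distrib, Finset.sum_add_distrib, Finset.sum_const,
            Finset.card_univ, Fintype.card_fin, ← Finset.mul_sum, ← hAsum, ← hB, nsmul_eq_mul]
      _ ≤ _ := Finset.sum_le_sum fun i _ => hterm i
  rw [hsum]
  calc Real.log M - 1/((M:ℝ)*N) * ((M:ℝ)*B - A)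
      = 1/(N:ℝ) * ((N:ℝ) * Real.log M + (1/M) * A - B) := by field_simp; ring
    _ ≤ _ := mul_le_mul_of_nonneg_left hsum2 (by positivity)

theorem implicit_alignment_lower_bound (D M N : ℕ) (hD : 1 ≤ D) (hM : 1 ≤ M) (hN : 1 ≤ N)
    (C : ℝ) (hC : 0 ≤ C)
    (ω : Fin M → EuclideanSpace ℝ (Fin D)) (hω : ∀ k, ‖ω k‖ ≤ C)
    (x v : Fin N → EuclideanSpace ℝ (Fin D)) (y : Fin N → Fin M) :
    ((1 / N) * ∑ i, -Real.log (Real.exp (inner ℝ (ω (y i)) (x i) : ℝ) /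
        ∑ j, Real.exp (inner ℝ (ω j) (x i) : ℝ))) +
    ((1 / N) * ∑ i, -Real.log (Real.exp (inner ℝ (ω (y i)) (v i) : ℝ) /
        ∑ j, Real.exp (inner ℝ (ω j) (v i) : ℝ))) ≥
      2 * Real.log M - (C / (M * N)) *
        ∑ j, ‖((M : ℝ) - 1) • (∑ i ∈ Finset.univ.filter (fun i => y i = j), (x i + v i)) -
          ∑ i ∈ Finset.univ.filter (fun i => y i ≠ j), (x i + v i)‖ := by
  have hM0 : (0:ℝ) < M := by exact_mod_cast hM
  have hN0 : (0:ℝ) < N := by exact_mod_cast hN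
  have hx := modality_bound D M N hM hN ω x y
  have hv := modality_bound D M N hM hN ω v y
  have hid : ∀ j : Fin M,
      ((M:ℝ) • (∑ i ∈ Finset.univ.filter (fun i => y i = j), x i) - ∑ i, x i)
      + ((M:ℝ) • (∑ i ∈ Finset.univ.filter (fun i => y i = j), v i) - ∑ i, v i)
      = ((M : ℝ) - 1) • (∑ i ∈ Finset.univ.filter (fun i => y i = j), (x i + v i)) -
          ∑ i ∈ Finset.univ.filter (fun i => y i ≠ j), (x i + v i) := by
    intro j
    have hP : ∑ i ∈ Finset.univ.filter (fun i => y i = j), (x i + v i)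
        = (∑ i ∈ Finset.univ.filter (fun i => y i = j), x i)
          + ∑ i ∈ Finset.univ.filter (fun i => y i = j), v i := Finset.sum_add_distrib
    have hQ : (∑ i ∈ Finset.univ.filter (fun i => y i = j), (x i + v i))
        + ∑ i ∈ Finset.univ.filter (fun i => y i ≠ j), (x i + v i)
        = (∑ i, x i) + ∑ i, v i := by
      rw [Finset.sum_filter_add_sum_filter_not]
      exact Finset.sum_add_distrib
    have hQ' : ∑ i ∈ Finset.univ.filter (fun i => y i ≠ j), (x i + v i)
        = ((∑ i, x i) + ∑ i, v i)
          - ∑ i ∈ Finset.univ.filter (fun i => y i = j), (x i + v i) := by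
      rw [← hQ]; abel
    rw [hQ', hP]; module
  have hbound : ∀ j : Fin M,
      (inner ℝ (ω j) ((M:ℝ) • (∑ i ∈ Finset.univ.filter (fun i => y i = j), x i) - ∑ i, x i) : ℝ)
      + (inner ℝ (ω j) ((M:ℝ) • (∑ i ∈ Finset.univ.filter (fun i => y i = j), v i) - ∑ i, v i) : ℝ)
      ≤ C * ‖((M : ℝ) - 1) • (∑ i ∈ Finset.univ.filter (fun i => y i = j), (x i + v i)) -
          ∑ i ∈ Finset.univ.filter (fun i => y i ≠ j), (x i + v i)‖ := by
    intro j
    rw [← inner_add_right, hid j]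
    exact le_trans (real_inner_le_norm _ _)
      (mul_le_mul_of_nonneg_right (hω j) (norm_nonneg _))
  have hS : (∑ j, (inner ℝ (ω j) ((M:ℝ) • (∑ i ∈ Finset.univ.filter (fun i => y i = j), x i)
        - ∑ i, x i) : ℝ))
      + ∑ j, (inner ℝ (ω j) ((M:ℝ) • (∑ i ∈ Finset.univ.filter (fun i => y i = j), v i)
        - ∑ i, v i) : ℝ)
      ≤ C * ∑ j, ‖((M : ℝ) - 1) • (∑ i ∈ Finset.univ.filter (fun i => y i = j), (x i + v i)) -
          ∑ i ∈ Finset.univ.filter (fun i => y i ≠ j), (x i + v i)‖ := by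
    rw [← Finset.sum_add_distrib, Finset.mul_sum]
    exact Finset.sum_le_sum fun j _ => hbound j
  have h1 : (C / ((M:ℝ) * N)) *
      ∑ j, ‖((M : ℝ) - 1) • (∑ i ∈ Finset.univ.filter (fun i => y i = j), (x i + v i)) -
          ∑ i ∈ Finset.univ.filter (fun i => y i ≠ j), (x i + v i)‖
      ≥ (1/((M:ℝ)*N)) *
        ((∑ j, (inner ℝ (ω j) ((M:ℝ) • (∑ i ∈ Finset.univ.filter (fun i => y i = j), x i)
          - ∑ i, x i) : ℝ))
        + ∑ j, (inner ℝ (ω j) ((M:ℝ) • (∑ i ∈ Finset.univ.filter (fun i => y i = j), v i)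
          - ∑ i, v i) : ℝ)) := by
    rw [ge_iff_le]
    calc _ ≤ (1/((M:ℝ)*N)) * (C *
        ∑ j, ‖((M : ℝ) - 1) • (∑ i ∈ Finset.univ.filter (fun i => y i = j), (x i + v i)) -
          ∑ i ∈ Finset.univ.filter (fun i => y i ≠ j), (x i + v i)‖) :=
        mul_le_mul_of_nonneg_left hS (by positivity)
      _ = _ := by ring
  rw [ge_iff_le]
  push_cast at *
  linarith
end
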